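/- arXiv:1907.10268 — 7 statements merged into one kernel-verified Lean document; each statement's English description precedes it below -/
import Mathlib

section
/- Let B = {b₁,...,bₙ} ⊆ ℤ^r and let I_B ⊆ ℤ[x₁,...,x_r] be the ideal generated by the binomials f_i = x^{b_i⁺} - x^{b_i⁻}. Assume that for each i, also -b_i ∈ B. If P ∈ I_B is a pure difference binomial, then there exist monomials m and n, a sign function ε: {1,...,n} → {+,-}, and t: {1,...,n} → ℕ such that n·P = m·S(ε,t), where S(ε,t) = ∏_{i=1}^n (f_i^{ε(i)})^{t(i)} - ∏_{i=1}^n (f_i^{-ε(i)})^{t(i)}. -/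
open MvPolynomial

noncomputable def xpow {r : ℕ} (d : Fin r → ℕ) : MvPolynomial (Fin r) ℤ :=
  ∏ j, X j ^ d j

def posPart {r : ℕ} (b : Fin r → ℤ) : Fin r → ℕ := fun j => (b j).toNat
def negPart {r : ℕ} (b : Fin r → ℤ) : Fin r → ℕ := fun j => (-(b j)).toNat

/-- The monomial `f_i^{ε(i)}`: `f_i⁺ = x^{b_i⁺}` if the sign is `+` (encoded `true`),
and `f_i⁻ = x^{b_i⁻}` if the sign is `-` (encoded `false`). -/
noncomputable def fpart {r n : ℕ} (B : Fin n → (Fin r → ℤ)) (i : Fin n) (s : Bool) :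
    MvPolynomial (Fin r) ℤ :=
  if s then xpow (posPart (B i)) else xpow (negPart (B i))

/-- The iterated subtraction binomial `S(ε,t) = ∏ᵢ (fᵢ^{ε(i)})^{t(i)} - ∏ᵢ (fᵢ^{-ε(i)})^{t(i)}`. -/
noncomputable def iterS {r n : ℕ} (B : Fin n → (Fin r → ℤ)) (ε : Fin n → Bool)
    (t : Fin n → ℕ) : MvPolynomial (Fin r) ℤ :=
  ∏ i, (fpart B i (ε i)) ^ t i - ∏ i, (fpart B i (!ε i)) ^ t i

lemma xpow_prod {r k : ℕ} (d : Fin k → (Fin r → ℕ)) :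
    ∏ i, xpow (d i) = xpow (∑ i, d i) := by
  unfold xpow
  rw [Finset.prod_comm]
  refine Finset.prod_congr rfl fun j _ => ?_
  rw [Finset.prod_pow_eq_pow_sum]
  simp [Finset.sum_apply]

lemma xpow_pow {r : ℕ} (d : Fin r → ℕ) (k : ℕ) : xpow d ^ k = xpow (k • d) := by
  unfold xpow
  rw [← Finset.prod_pow]
  exact Finset.prod_congr rfl fun j _ => by
    rw [← pow_mul]; simp [Pi.smul_apply, mul_comm]

lemma xpow_add {r : ℕ} (a b : Fin r → ℕ) : xpow (a + b) = xpow a * xpow b := by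
  unfold xpow
  rw [← Finset.prod_mul_distrib]
  exact Finset.prod_congr rfl fun j _ => by rw [← pow_add]; rfl

section aux
variable {r n : ℕ} (B : Fin n → (Fin r → ℤ))

noncomputable abbrev latt : Submodule ℤ (Fin r → ℤ) := Submodule.span ℤ (Set.range B)

noncomputable def phi : MvPolynomial (Fin r) ℤ →ₐ[ℤ]
    AddMonoidAlgebra ℤ ((Fin r → ℤ) ⧸ latt B) :=
  MvPolynomial.aeval (fun j =>
    AddMonoidAlgebra.single (Submodule.Quotient.mk (Pi.single j 1 : Fin r → ℤ)) (1 : ℤ))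

lemma phi_xpow (d : Fin r → ℕ) :
    phi B (xpow d) =
      AddMonoidAlgebra.single
        (Submodule.Quotient.mk (fun j => (d j : ℤ) : Fin r → ℤ)) 1 := by
  unfold xpow phi
  rw [map_prod]
  simp only [map_pow, MvPolynomial.aeval_X, AddMonoidAlgebra.single_pow, one_pow]
  rw [AddMonoidAlgebra.prod_single]
  congr 1
  · simp only [← Submodule.mkQ_apply, ← map_nsmul, ← map_sum]
    congr 1
    funext j
    simp [Pi.single_apply, Finset.sum_apply]
  · simp
end aux

/-- If `B` is closed under negation, any pure difference binomial `P` in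
`I_B = (x^{b_i⁺} - x^{b_i⁻} : i)` satisfies `n·P = m·S(ε,t)` for some monomials
`m`, `n`, a sign vector `ε` and `t : {1,…,n} → ℕ`. -/
theorem stmt2 (r n : ℕ) (B : Fin n → (Fin r → ℤ))
    (hsym : ∀ i : Fin n, ∃ i' : Fin n, B i' = -B i)
    (P : MvPolynomial (Fin r) ℤ)
    (hP : P ∈ Ideal.span (Set.range fun i : Fin n =>
      xpow (posPart (B i)) - xpow (negPart (B i))))
    (hPbin : ∃ p q : Fin r → ℕ, P = xpow p - xpow q) :
    ∃ (m nn : Fin r → ℕ) (ε : Fin n → Bool) (t : Fin n → ℕ),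
      xpow nn * P = xpow m * iterS B ε t := by
  obtain ⟨p, q, rfl⟩ := hPbin
  -- Step 1: the image of P under phi vanishes
  have hker : ∀ x ∈ (Set.range fun i : Fin n =>
      xpow (_root_.posPart (B i)) - xpow (_root_.negPart (B i))), phi B x = 0 := by
    rintro x ⟨i, rfl⟩
    rw [map_sub, phi_xpow, phi_xpow, sub_eq_zero]
    congr 1
    rw [Submodule.Quotient.eq]
    have : ((fun j => ((_root_.posPart (B i)) j : ℤ)) - fun j => ((_root_.negPart (B i)) j : ℤ))
        = B i := by
      funext j
      simp only [Pi.sub_apply, _root_.posPart, _root_.negPart]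
      omega
    rw [this]
    exact Submodule.subset_span ⟨i, rfl⟩
  have hφ0 : phi B (xpow p - xpow q) = 0 := by
    have hle : Ideal.span (Set.range fun i : Fin n =>
        xpow (_root_.posPart (B i)) - xpow (_root_.negPart (B i))) ≤ RingHom.ker (phi B).toRingHom :=
      Ideal.span_le.mpr fun x hx => hker x hx
    exact hle hP
  rw [map_sub, phi_xpow, phi_xpow, sub_eq_zero] at hφ0
  have hmk : (Submodule.Quotient.mk (fun j => (p j : ℤ) : Fin r → ℤ) :
      (Fin r → ℤ) ⧸ latt B) = Submodule.Quotient.mk (fun j => (q j : ℤ)) :=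
    AddMonoidAlgebra.single_left_injective (one_ne_zero) hφ0
  have hmem : ((fun j => (p j : ℤ)) - fun j => (q j : ℤ)) ∈ latt B :=
    (Submodule.Quotient.eq _).mp hmk
  obtain ⟨c, hc⟩ := (Submodule.mem_span_range_iff_exists_fun ℤ).mp hmem
  -- Step 2: witnesses
  set ε : Fin n → Bool := fun i => decide (0 ≤ c i) with hε
  set t : Fin n → ℕ := fun i => (c i).natAbs with ht
  set eA : Fin n → (Fin r → ℕ) := fun i =>
    if 0 ≤ c i then _root_.posPart (B i) else _root_.negPart (B i) with heA
  set eC : Fin n → (Fin r → ℕ) := fun i =>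
    if 0 ≤ c i then _root_.negPart (B i) else _root_.posPart (B i) with heC
  have hfA : ∀ i, fpart B i (ε i) = xpow (eA i) := by
    intro i
    by_cases h : 0 ≤ c i <;> simp [fpart, heA, hε, h]
  have hfC : ∀ i, fpart B i (!ε i) = xpow (eC i) := by
    intro i
    by_cases h : 0 ≤ c i <;> simp [fpart, heC, hε, h]
  have key : ∀ i j, (t i : ℤ) * ((eA i j : ℤ) - eC i j) = c i * B i j := by
    intro i j
    by_cases h : 0 ≤ c i
    · have h1 : ((eA i j : ℤ)) - eC i j = B i j := by
        simp only [heA, heC, if_pos h, _root_.posPart, _root_.negPart]; omega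
      have h2 : (t i : ℤ) = c i := by simp only [ht]; omega
      rw [h1, h2]
    · have h1 : ((eA i j : ℤ)) - eC i j = -B i j := by
        simp only [heA, heC, if_neg h, _root_.posPart, _root_.negPart]; omega
      have h2 : (t i : ℤ) = -c i := by simp only [ht]; omega
      rw [h1, h2]; ring
  set nn : Fin r → ℕ := ∑ i, t i • eA i with hnn
  set nnC : Fin r → ℕ := ∑ i, t i • eC i with hnnC
  -- Step 3: coordinate identity nn + q = p + nnC
  have hco : nn + q = p + nnC := by
    funext j
    have hcj : ∑ i, c i * B i j = (p j : ℤ) - q j := by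
      have := congrFun hc j
      simpa [Finset.sum_apply] using this
    have : ((nn j : ℤ)) + q j = (p j : ℤ) + nnC j := by
      have hs : (nn j : ℤ) - nnC j = ∑ i, c i * B i j := by
        simp only [hnn, hnnC, Finset.sum_apply, Pi.smul_apply, smul_eq_mul]
        push_cast
        rw [← Finset.sum_sub_distrib]
        exact Finset.sum_congr rfl fun i _ => by
          rw [← key i j]; ring
      rw [hcj] at hs
      linarith
    have := this
    simp only [Pi.add_apply]
    exact_mod_cast this
  refine ⟨p, nn, ε, t, ?_⟩
  have hA : ∏ i, fpart B i (ε i) ^ t i = xpow nn := by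
    simp_rw [hfA, xpow_pow]
    rw [xpow_prod]
  have hC : ∏ i, fpart B i (!ε i) ^ t i = xpow nnC := by
    simp_rw [hfC, xpow_pow]
    rw [xpow_prod]
  unfold iterS
  rw [hA, hC, mul_sub, mul_sub, ← xpow_add, ← xpow_add, ← xpow_add, ← xpow_add,
    add_comm p nn, hco]
end

section
/- Let v₁,...,v_a ∈ ℕ^n, and let C be the intersection of ℕ^n with the rational cone spanned by v₁,...,v_a (i.e., C = ℕ^n ∩ {Σ λ_i v_i : λ_i ∈ ℚ_{≥0}}). Then every element of C is a finite sum of elements of the set (C ∩ {Σ_{i=1}^a λ_i v_i : λ_i ∈ [0,1)}) ∪ {v₁,...,v_a}. -/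
/-- Lattice points of the rational cone spanned by `v₁,…,v_a ∈ ℕ^n` are generated,
as a monoid, by the `vᵢ` together with the lattice points of the fundamental
parallelepiped `{Σ λᵢ vᵢ : λᵢ ∈ [0,1)}`. -/
theorem stmt4 (n a : ℕ) (v : Fin a → (Fin n → ℕ)) :
    let C : Set (Fin n → ℕ) := {x | ∃ l : Fin a → ℚ, (∀ i, 0 ≤ l i) ∧
      ∀ j, (x j : ℚ) = ∑ i, l i * (v i j : ℚ)}
    let S : Set (Fin n → ℕ) := {x ∈ C | ∃ l : Fin a → ℚ,
      (∀ i, 0 ≤ l i ∧ l i < 1) ∧ ∀ j, (x j : ℚ) = ∑ i, l i * (v i j : ℚ)} ∪ Set.range v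
    ∀ c ∈ C, c ∈ AddSubmonoid.closure S := by
  intro C S c hc
  obtain ⟨l, hl0, hl⟩ := hc
  set m : Fin a → ℕ := fun i => ⌊l i⌋.toNat with hm
  have hmcast : ∀ i, (m i : ℚ) = (⌊l i⌋ : ℚ) := by
    intro i
    have h := Int.toNat_of_nonneg (Int.floor_nonneg.2 (hl0 i))
    exact_mod_cast congrArg (fun z : ℤ => (z : ℚ)) h
  have hmle : ∀ i, (m i : ℚ) ≤ l i := fun i => (hmcast i) ▸ Int.floor_le (l i)
  have hmlt : ∀ i, l i - (m i : ℚ) < 1 := by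
    intro i
    have := Int.lt_floor_add_one (l i)
    rw [hmcast i]; linarith
  have hsumle : ∀ j, ∑ i, m i * v i j ≤ c j := by
    intro j
    have : ((∑ i, m i * v i j : ℕ) : ℚ) ≤ (c j : ℚ) := by
      push_cast
      rw [hl j]
      exact Finset.sum_le_sum fun i _ =>
        mul_le_mul_of_nonneg_right (hmle i) (by positivity)
    exact_mod_cast this
  set r : Fin n → ℕ := fun j => c j - ∑ i, m i * v i j with hr
  have hrcast : ∀ j, (r j : ℚ) = ∑ i, (l i - (m i : ℚ)) * (v i j : ℚ) := by
    intro j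
    have : (r j : ℚ) = (c j : ℚ) - ∑ i, (m i : ℚ) * (v i j : ℚ) := by
      rw [hr]
      push_cast [Nat.cast_sub (hsumle j)]
      ring
    rw [this, hl j, ← Finset.sum_sub_distrib]
    congr 1; ext i; ring
  have hrS : r ∈ S := by
    left
    have h0 : ∀ i, (0:ℚ) ≤ l i - m i := fun i => by linarith [hmle i]
    exact ⟨⟨fun i => l i - m i, h0, hrcast⟩,
      fun i => l i - m i, fun i => ⟨h0 i, hmlt i⟩, hrcast⟩
  have hceq : c = r + ∑ i, m i • v i := by
    funext j
    simp only [Pi.add_apply, Finset.sum_apply, Pi.smul_apply, smul_eq_mul, hr]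
    have := hsumle j
    omega
  rw [hceq]
  have hvS : ∀ i, v i ∈ S := fun i => Or.inr ⟨i, rfl⟩
  exact add_mem (AddSubmonoid.subset_closure hrS)
    (AddSubmonoid.sum_mem _ fun i _ =>
      AddSubmonoid.nsmul_mem _ (AddSubmonoid.subset_closure (hvS i)) _)
end

section
/- Let b₁,...,bₙ ∈ ℤ^r, let f_j = x^{b_j⁺} - x^{b_j⁻} ∈ ℤ[x₁,...,x_r], and let M be a positive integer. Suppose that Σ_{i=1}^M ε_i m_i f_{j_i} is a pure difference binomial x^{c⁺} - x^{c⁻} (c⁺, c⁻ ∈ ℕ^r), where each ε_i ∈ {1,-1}, each m_i is a monomial, and j_i ∈ {1,...,n}. Then there exist integers a₁,...,aₙ with Σ_{i=1}^n |a_i| ≤ M and c⁺ - c⁻ = Σ_{i=1}^n a_i b_i. -/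
open MvPolynomial

/-- If a signed sum `Σ_{i=1}^M εᵢ mᵢ f_{jᵢ}` of monomial multiples of the binomials
`f_j = x^{b_j⁺} - x^{b_j⁻}` is a pure difference binomial `x^{c⁺} - x^{c⁻}`, then
`c⁺ - c⁻ = Σ aᵢ bᵢ` for integers `aᵢ` with `Σ |aᵢ| ≤ M`. -/
theorem stmt5 (r n M : ℕ) (hM : 1 ≤ M) (b : Fin n → (Fin r → ℤ))
    (ε : Fin M → ℤ) (hε : ∀ i, ε i = 1 ∨ ε i = -1)
    (m : Fin M → (Fin r → ℕ)) (jdx : Fin M → Fin n) (cp cm : Fin r → ℕ)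
    (h : ∑ i, C (ε i) * xpow (m i) *
        (xpow (posPart (b (jdx i))) - xpow (negPart (b (jdx i))))
      = xpow cp - xpow cm) :
    ∃ a : Fin n → ℤ, (∑ i, |a i|) ≤ (M : ℤ) ∧
      ∀ k, (cp k : ℤ) - (cm k : ℤ) = ∑ i, a i * b i k := by
  classical
  refine ⟨fun j => ∑ i ∈ Finset.univ.filter (fun i => jdx i = j), ε i, ?_, ?_⟩
  · calc ∑ j, |∑ i ∈ Finset.univ.filter (fun i => jdx i = j), ε i|
        ≤ ∑ j, ∑ i ∈ Finset.univ.filter (fun i => jdx i = j), |ε i| :=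
          Finset.sum_le_sum fun j _ => Finset.abs_sum_le_sum_abs _ _
      _ = ∑ i, |ε i| := Finset.sum_fiberwise _ _ _
      _ = ∑ _i : Fin M, (1 : ℤ) := by
          refine Finset.sum_congr rfl fun i _ => ?_
          rcases hε i with h1 | h1 <;> simp [h1]
      _ = M := by simp
  · intro k
    set g : Fin r → Polynomial ℤ := fun j => if j = k then Polynomial.X else 1 with hg
    have hx : ∀ d : Fin r → ℕ, aeval g (xpow d) = Polynomial.X ^ (d k) := by
      intro d
      simp only [xpow, map_prod, map_pow, aeval_X, hg]
      rw [Finset.prod_eq_single k]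
      · simp
      · intro j _ hj; simp [hj]
      · simp
    set L : Polynomial ℤ →ₗ[ℤ] ℤ :=
      (Polynomial.leval (1 : ℤ)).comp (Polynomial.derivative : Polynomial ℤ →ₗ[ℤ] Polynomial ℤ)
      with hLdef
    set F : MvPolynomial (Fin r) ℤ →ₗ[ℤ] ℤ := L.comp (aeval g).toLinearMap with hFdef
    have hL : ∀ nn : ℕ, L ((Polynomial.X : Polynomial ℤ) ^ nn) = nn := by
      intro nn
      simp [hLdef, Polynomial.leval, Polynomial.derivative_X_pow]
    have hF : ∀ (c : ℤ) (u v w : Fin r → ℕ),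
        F (MvPolynomial.C c * xpow u * (xpow v - xpow w)) = c * ((v k : ℤ) - (w k : ℤ)) := by
      intro c u v w
      have : (aeval g) (MvPolynomial.C c * xpow u * (xpow v - xpow w))
          = c • ((Polynomial.X : Polynomial ℤ) ^ (u k + v k)
              - (Polynomial.X : Polynomial ℤ) ^ (u k + w k)) := by
        simp only [map_mul, map_sub, hx, aeval_C, algebraMap_int_eq, eq_intCast, map_intCast]
        rw [zsmul_eq_mul]
        push_cast
        ring
      simp only [hFdef, LinearMap.comp_apply, AlgHom.toLinearMap_apply, this, map_zsmul, map_sub,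
        hL]
      rw [smul_eq_mul]
      push_cast
      ring
    have key := congrArg F h
    rw [map_sum, map_sub] at key
    simp only [hF, hFdef, LinearMap.comp_apply, AlgHom.toLinearMap_apply, hx, hL] at key
    have key2 : ∑ i, ε i * b (jdx i) k = (cp k : ℤ) - (cm k : ℤ) := by
      rw [← key]
      refine Finset.sum_congr rfl fun i _ => ?_
      have : ((_root_.posPart (b (jdx i)) k : ℤ) - (_root_.negPart (b (jdx i)) k : ℤ)) = b (jdx i) k := by
        simp only [_root_.posPart, _root_.negPart]
        omega
      have h2 := hF (ε i) (m i) (_root_.posPart (b (jdx i))) (_root_.negPart (b (jdx i)))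
      simp only [hFdef, LinearMap.comp_apply, AlgHom.toLinearMap_apply] at h2
      rw [h2, this]
    rw [← key2]
    rw [← Finset.sum_fiberwise Finset.univ jdx (fun i => ε i * b (jdx i) k)]
    refine Finset.sum_congr rfl fun j _ => ?_
    rw [Finset.sum_mul]
    refine Finset.sum_congr rfl fun i hi => ?_
    rw [(Finset.mem_filter.mp hi).2]
end

section
/- Let A = [1,1,1] (a 1×3 matrix), let n ≥ 2 be an integer, and let B_n = {(0,1,-1), (-1,n,1-n)} ⊆ ℤ³. Then B_n is a ℤ-basis of the kernel of A, the fibre F(e₂) = {v ∈ ℕ³ : v₁+v₂+v₃ = 1} equals {e₁, e₂, e₃}, and the graph on F(e₂) with edges given by ±B_n has exactly two connected components, namely {e₂, e₃} and {e₁}. -/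
/-- For `A = [1,1,1]` and `n ≥ 2`, the set `B_n = {(0,1,-1), (-1,n,1-n)}` is a
ℤ-basis of the kernel of `A`; the fibre `F(e₂) = {v ∈ ℕ³ : v₁+v₂+v₃ = 1}` equals
`{e₁,e₂,e₃}`; and the graph on `F(e₂)` with edges given by `±B_n` has exactly two
connected components `{e₂,e₃}` and `{e₁}` (i.e. `e₂` and `e₃` are adjacent, while
`e₁` is adjacent to neither). -/
theorem stmt10 (n : ℕ) (hn : 2 ≤ n) :
    let b₁ : Fin 3 → ℤ := ![0,1,-1]
    let b₂ : Fin 3 → ℤ := ![-1,(n:ℤ),1-(n:ℤ)]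
    let moves : Set (Fin 3 → ℤ) := {b₁, -b₁, b₂, -b₂}
    let e : Fin 3 → (Fin 3 → ℕ) := fun i => fun j => if j = i then 1 else 0
    let F : Set (Fin 3 → ℕ) := {v | v 0 + v 1 + v 2 = 1}
    let Adj : (Fin 3 → ℕ) → (Fin 3 → ℕ) → Prop := fun v w =>
      v ∈ F ∧ w ∈ F ∧ v ≠ w ∧ (fun i => (v i : ℤ) - (w i : ℤ)) ∈ moves
    -- B_n is a ℤ-basis of the kernel of A = [1,1,1]
    ((b₁ 0 + b₁ 1 + b₁ 2 = 0 ∧ b₂ 0 + b₂ 1 + b₂ 2 = 0) ∧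
      (∀ v : Fin 3 → ℤ, v 0 + v 1 + v 2 = 0 → ∃ c d : ℤ, v = c • b₁ + d • b₂) ∧
      (∀ c d : ℤ, c • b₁ + d • b₂ = 0 → c = 0 ∧ d = 0)) ∧
    -- the fibre is {e₁, e₂, e₃}
    F = {e 0, e 1, e 2} ∧
    -- exactly two connected components: {e₂, e₃} and {e₁}
    Adj (e 1) (e 2) ∧ ¬ Adj (e 0) (e 1) ∧ ¬ Adj (e 0) (e 2) := by
  intro b₁ b₂ moves e F Adj
  have hb₁ : ∀ i, b₁ i = ![0,1,-1] i := fun i => rfl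
  refine ⟨⟨⟨by simp [b₁], by show (-1:ℤ) + n + (1-n) = 0; ring⟩, ?_, ?_⟩, ?_, ?_, ?_, ?_⟩
  · intro v hv
    refine ⟨v 1 + v 0 * n, -(v 0), ?_⟩
    funext i
    fin_cases i <;> simp [b₁, b₂] <;> ring_nf <;> omega
  · intro c d h
    have h0 := congrFun h 0
    have h1 := congrFun h 1
    simp [b₁, b₂] at h0 h1
    have hd : d = 0 := by omega
    subst hd
    simp at h1
    exact ⟨h1, rfl⟩
  · ext v
    simp only [Set.mem_setOf_eq, Set.mem_insert_iff, Set.mem_singleton_iff, F, e]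
    constructor
    · intro hv
      rcases Nat.lt_or_ge (v 0) 1 with h0 | h0
      · rcases Nat.lt_or_ge (v 1) 1 with h1 | h1
        · right; right
          funext j; fin_cases j <;> simp <;> omega
        · right; left
          funext j; fin_cases j <;> simp <;> omega
      · left
        funext j; fin_cases j <;> simp <;> omega
    · rintro (rfl | rfl | rfl) <;> simp
  · refine ⟨by simp [F, e], by simp [F, e], ?_, ?_⟩
    · intro h
      have := congrFun h 1
      simp [e] at this
    · left
      funext i; fin_cases i <;> simp [e, b₁]
  · rintro ⟨-, -, -, h⟩
    rcases h with h | h | h | h <;>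
      first
      | (have h0 := congrFun h 0; have h1 := congrFun h 1;
         simp [e, b₁, b₂] at h0 h1 <;> omega)
  · rintro ⟨-, -, -, h⟩
    rcases h with h | h | h | h <;>
      first
      | (have h0 := congrFun h 0; have h1 := congrFun h 1;
         simp [e, b₁, b₂] at h0 h1 <;> omega)
end

section
/- Let u = (2,2,...,2) ∈ ℕ^n (n ≥ 4) and A_n the 2×n matrix with rows (1,2,...,n) and (n,n-1,...,1). Let B_n = {b₂,...,b_{n-1}} where b_k ∈ ℤ^n has entries 1, -2, 1 in positions k-1, k, k+1 and 0 elsewhere. Let v = (n,0,...,0,n) ∈ ℕ^n. Then v ∈ F(u), and for any c₁,...,c_s ∈ ±B_n with v + Σ_{i=1}^s c_i ∈ F(u), either s ≥ n-2 or v + Σ_{i=1}^s c_i = v. -/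
private lemma gauss2 (n : ℕ) : ∑ j ∈ Finset.range n, (j + 1) * 2 = n * (n + 1) := by
  induction n with
  | zero => simp
  | succ t ih => rw [Finset.sum_range_succ, ih]; ring

/-- For `A_n` with rows `(1,2,…,n)` and `(n,n-1,…,1)`, `u = (2,…,2)`, moves
`b_k` (entries `1,-2,1` at positions `k-1,k,k+1`), and `v = (n,0,…,0,n)`:
`v` lies in the fibre `F(u)`, and any walk `v + Σ cᵢ` with steps `cᵢ ∈ ±B_n`
landing back in `F(u)` either has length `≥ n-2` or returns to `v`. -/
theorem stmt15 (n : ℕ) (hn : 4 ≤ n) :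
    let F : Set (Fin n → ℕ) := {w | (∑ j : Fin n, ((j : ℕ) + 1) * w j = ∑ j : Fin n, ((j : ℕ) + 1) * 2) ∧
      (∑ j : Fin n, (n - (j : ℕ)) * w j = ∑ j : Fin n, (n - (j : ℕ)) * 2)}
    let bvec : ℕ → (Fin n → ℤ) := fun k j =>
      if (j : ℕ) + 1 = k then 1 else if (j : ℕ) = k then -2 else
        if (j : ℕ) = k + 1 then 1 else 0
    let v : Fin n → ℕ := fun j => if (j : ℕ) = 0 ∨ (j : ℕ) = n - 1 then n else 0
    v ∈ F ∧
    ∀ (s : ℕ) (c : Fin s → (Fin n → ℤ)),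
      (∀ i, ∃ k : ℕ, 1 ≤ k ∧ k ≤ n - 2 ∧ (c i = bvec k ∨ c i = -bvec k)) →
      ∀ w : Fin n → ℕ, w ∈ F → (∀ j, (w j : ℤ) = (v j : ℤ) + ∑ i, c i j) →
        n - 2 ≤ s ∨ w = v := by
  intro F bvec v
  refine ⟨⟨?_, ?_⟩, ?_⟩
  · -- first fibre equation for v
    rw [Fin.sum_univ_eq_sum_range (fun t => (t + 1) * (if t = 0 ∨ t = n - 1 then n else 0)) n,
      Fin.sum_univ_eq_sum_range (fun t => (t + 1) * 2) n]
    have key : ∀ t ∈ Finset.range n, (t + 1) * (if t = 0 ∨ t = n - 1 then n else 0)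
        = (if t = 0 then n else 0) + (if t = n - 1 then n * n else 0) := by
      intro t ht
      simp only [Finset.mem_range] at ht
      by_cases h0 : t = 0
      · subst h0
        rw [if_pos (Or.inl rfl), if_pos rfl, if_neg (by omega)]
        ring
      · by_cases h1 : t = n - 1
        · subst h1
          rw [if_pos (Or.inr rfl), if_neg h0, if_pos rfl, show n - 1 + 1 = n from by omega]
          ring
        · rw [if_neg (by tauto), if_neg h0, if_neg h1]
          ring
    rw [Finset.sum_congr rfl key, Finset.sum_add_distrib, Finset.sum_ite_eq' (Finset.range n) 0,
      Finset.sum_ite_eq' (Finset.range n) (n - 1), gauss2]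
    rw [if_pos (Finset.mem_range.mpr (by omega)), if_pos (Finset.mem_range.mpr (by omega))]
    ring
  · -- second fibre equation for v
    rw [Fin.sum_univ_eq_sum_range (fun t => (n - t) * (if t = 0 ∨ t = n - 1 then n else 0)) n,
      Fin.sum_univ_eq_sum_range (fun t => (n - t) * 2) n]
    have key : ∀ t ∈ Finset.range n, (n - t) * (if t = 0 ∨ t = n - 1 then n else 0)
        = (if t = 0 then n * n else 0) + (if t = n - 1 then n else 0) := by
      intro t ht
      simp only [Finset.mem_range] at ht
      by_cases h0 : t = 0
      · subst h0
        rw [if_pos (Or.inl rfl), if_pos rfl, if_neg (by omega), Nat.sub_zero]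
        ring
      · by_cases h1 : t = n - 1
        · subst h1
          rw [if_pos (Or.inr rfl), if_neg h0, if_pos rfl, show n - (n - 1) = 1 from by omega]
          ring
        · rw [if_neg (by tauto), if_neg h0, if_neg h1]
          ring
    have key2 : ∑ t ∈ Finset.range n, (n - t) * 2 = ∑ t ∈ Finset.range n, ((n - 1 - t) + 1) * 2 :=
      Finset.sum_congr rfl (by intro t ht; simp only [Finset.mem_range] at ht; omega)
    rw [Finset.sum_congr rfl key, Finset.sum_add_distrib, Finset.sum_ite_eq' (Finset.range n) 0,
      Finset.sum_ite_eq' (Finset.range n) (n - 1), key2,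
      Finset.sum_range_reflect (fun t => (t + 1) * 2) n, gauss2]
    rw [if_pos (Finset.mem_range.mpr (by omega)), if_pos (Finset.mem_range.mpr (by omega))]
    ring
  · -- main walk statement
    intro s c hc w _hwF hw
    by_cases hs : n - 2 ≤ s
    · exact Or.inl hs
    right
    have hs' : s < n - 2 := by omega
    classical
    choose k hk1 hk2 hkc using hc
    set ε : Fin s → ℤ := fun i => if c i = bvec (k i) then 1 else -1 with hεdef
    have hci : ∀ i (j : Fin n), c i j = ε i * bvec (k i) j := by
      intro i j
      by_cases h : c i = bvec (k i)
      · have hε : ε i = 1 := if_pos h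
        rw [hε, h, one_mul]
      · have h2 : c i = -bvec (k i) := (hkc i).resolve_left h
        have hε : ε i = -1 := if_neg h
        rw [hε, h2]
        simp
    set m : ℕ → ℤ := fun t => ∑ i : Fin s, if k i = t then ε i else 0 with hmdef
    obtain ⟨k0, hk01, hk02, hk0ne⟩ :
        ∃ k0, 1 ≤ k0 ∧ k0 ≤ n - 2 ∧ ∀ i, k i ≠ k0 := by
      by_contra h
      push_neg at h
      have hsub : Finset.Icc 1 (n - 2) ⊆ Finset.image k Finset.univ := by
        intro t ht
        simp only [Finset.mem_Icc] at ht
        obtain ⟨i, hi⟩ := h t ht.1 ht.2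
        exact Finset.mem_image.mpr ⟨i, Finset.mem_univ i, hi⟩
      have h1 := Finset.card_le_card hsub
      have h2 := Finset.card_image_le (s := (Finset.univ : Finset (Fin s))) (f := k)
      rw [Nat.card_Icc] at h1
      simp only [Finset.card_univ, Fintype.card_fin] at h2
      omega
    have hterm : ∀ (i : Fin s) (j : Fin n), c i j =
        (if k i = (j : ℕ) + 1 then ε i else 0) - 2 * (if k i = (j : ℕ) then ε i else 0)
          + (if k i = (j : ℕ) - 1 then ε i else 0) := by
      intro i j
      rw [hci i j]
      have h1 := hk1 i
      simp only [bvec]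
      split_ifs <;> first | ring1 | (exfalso; omega)
    have hd : ∀ j : Fin n, (∑ i, c i j) = m ((j : ℕ) + 1) - 2 * m (j : ℕ) + m ((j : ℕ) - 1) := by
      intro j
      rw [Finset.sum_congr rfl (fun i _ => hterm i j), Finset.sum_add_distrib,
        Finset.sum_sub_distrib, ← Finset.mul_sum]
    have hm0 : ∀ t, t = 0 ∨ n - 1 ≤ t → m t = 0 := by
      intro t ht
      apply Finset.sum_eq_zero
      intro i _
      have h1 := hk1 i
      have h2 := hk2 i
      rw [if_neg (by omega)]
    have mk0 : m k0 = 0 := by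
      apply Finset.sum_eq_zero
      intro i _
      rw [if_neg (hk0ne i)]
    have hconv : ∀ j, 1 ≤ j → j ≤ n - 2 → 2 * m j ≤ m (j - 1) + m (j + 1) := by
      intro j hj1 hj2
      have hjn : j < n := by omega
      have h := hw ⟨j, hjn⟩
      rw [hd ⟨j, hjn⟩] at h
      simp only [Fin.val_mk] at h
      have hv : v ⟨j, hjn⟩ = 0 := by
        simp only [v, Fin.val_mk]
        rw [if_neg (by omega)]
      rw [hv] at h
      have hw0 : (0 : ℤ) ≤ (w ⟨j, hjn⟩ : ℤ) := Int.natCast_nonneg _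
      push_cast at h
      linarith
    set δ : ℕ → ℤ := fun t => m (t + 1) - m t with hδdef
    have hmono : ∀ a b, a ≤ b → b ≤ n - 2 → δ a ≤ δ b := by
      intro a b hab hb
      induction b with
      | zero => rw [show a = 0 from by omega]
      | succ t ih =>
        rcases Nat.lt_or_ge a (t + 1) with h | h
        · have h1 : δ a ≤ δ t := ih (by omega) (by omega)
          have h2 := hconv (t + 1) (by omega) (by omega)
          have h3 : δ t ≤ δ (t + 1) := by
            simp only [hδdef]
            rw [show t + 1 - 1 = t from by omega] at h2
            linarith
          linarith
        · rw [show a = t + 1 from by omega]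
    have htele : ∀ q, ∑ i ∈ Finset.range q, δ i = m q := by
      intro q
      simp only [hδdef]
      rw [Finset.sum_range_sub m q, hm0 0 (Or.inl rfl), sub_zero]
    have hIco : ∀ p q, p ≤ q → ∑ i ∈ Finset.Ico p q, δ i = m q - m p := by
      intro p q h
      rw [Finset.sum_Ico_eq_sub _ h, htele, htele]
    have hneg : ∀ p j q, p ≤ j → j ≤ q → q ≤ n - 1 → m p = 0 → m q = 0 → m j ≤ 0 := by
      intro p j q hpj hjq hq hp0 hq0
      by_contra hpos
      push_neg at hpos
      have h1 : ∑ i ∈ Finset.Ico p j, δ i = m j := by rw [hIco p j hpj, hp0, sub_zero]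
      have h2 : ∑ i ∈ Finset.Ico j q, δ i = -m j := by rw [hIco j q hjq, hq0, zero_sub]
      have e1 : ∃ i ∈ Finset.Ico p j, 0 < δ i := by
        by_contra h
        push_neg at h
        have := Finset.sum_nonpos h
        rw [h1] at this
        linarith
      have e2 : ∃ i ∈ Finset.Ico j q, δ i < 0 := by
        by_contra h
        push_neg at h
        have := Finset.sum_nonneg h
        rw [h2] at this
        linarith
      obtain ⟨i1, hi1, hp1⟩ := e1
      obtain ⟨i2, hi2, hp2⟩ := e2
      simp only [Finset.mem_Ico] at hi1 hi2
      have := hmono i1 i2 (by omega) (by omega)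
      linarith
    have h00 : m 0 = 0 := hm0 0 (Or.inl rfl)
    have h0n : m (n - 1) = 0 := hm0 (n - 1) (Or.inr le_rfl)
    have hbase : m (k0 - 1) = 0 ∧ m (k0 + 1) = 0 := by
      have hcv := hconv k0 hk01 hk02
      have h1 : m (k0 - 1) ≤ 0 := hneg 0 (k0 - 1) (n - 1) (by omega) (by omega) le_rfl h00 h0n
      have h2 : m (k0 + 1) ≤ 0 := hneg 0 (k0 + 1) (n - 1) (by omega) (by omega) le_rfl h00 h0n
      constructor <;> linarith [mk0]
    have hdown : ∀ t, t ≤ k0 → m (k0 - t) = 0 := by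
      intro t
      induction t using Nat.strong_induction_on with
      | _ t ih =>
        intro ht
        rcases t with _ | (_ | r)
        · simpa using mk0
        · simpa using hbase.1
        · have e1 : m (k0 - (r + 1)) = 0 := ih (r + 1) (by omega) (by omega)
          have e2 : m (k0 - r) = 0 := ih r (by omega) (by omega)
          have hcv := hconv (k0 - (r + 1)) (by omega) (by omega)
          rw [show k0 - (r + 1) - 1 = k0 - (r + 2) from by omega,
            show k0 - (r + 1) + 1 = k0 - r from by omega, e1, e2] at hcv
          have hle : m (k0 - (r + 2)) ≤ 0 :=
            hneg 0 (k0 - (r + 2)) (n - 1) (by omega) (by omega) le_rfl h00 h0n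
          have hge : 0 ≤ m (k0 - (r + 2)) := by linarith
          exact le_antisymm hle hge
    have hup : ∀ t, k0 + t ≤ n - 1 → m (k0 + t) = 0 := by
      intro t
      induction t using Nat.strong_induction_on with
      | _ t ih =>
        intro ht
        rcases t with _ | (_ | r)
        · simpa using mk0
        · simpa using hbase.2
        · have e1 : m (k0 + (r + 1)) = 0 := ih (r + 1) (by omega) (by omega)
          have e2 : m (k0 + r) = 0 := ih r (by omega) (by omega)
          have hcv := hconv (k0 + (r + 1)) (by omega) (by omega)
          rw [show k0 + (r + 1) - 1 = k0 + r from by omega,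
            show k0 + (r + 1) + 1 = k0 + (r + 2) from by omega, e1, e2] at hcv
          have hle : m (k0 + (r + 2)) ≤ 0 :=
            hneg 0 (k0 + (r + 2)) (n - 1) (by omega) (by omega) le_rfl h00 h0n
          have hge : 0 ≤ m (k0 + (r + 2)) := by linarith
          exact le_antisymm hle hge
    have mall : ∀ j, j ≤ n - 1 → m j = 0 := by
      intro j hj
      rcases le_or_gt j k0 with h | h
      · have := hdown (k0 - j) (by omega)
        rwa [show k0 - (k0 - j) = j from by omega] at this
      · have := hup (j - k0) (by omega)
        rwa [show k0 + (j - k0) = j from by omega] at this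
    funext j
    have hjlt := j.isLt
    have h := hw j
    rw [hd j] at h
    have z1 : m ((j : ℕ) + 1) = 0 := by
      rcases le_or_gt ((j : ℕ) + 1) (n - 1) with h' | h'
      · exact mall _ h'
      · exact hm0 _ (Or.inr (by omega))
    have z2 : m (j : ℕ) = 0 := mall _ (by omega)
    have z3 : m ((j : ℕ) - 1) = 0 := mall _ (by omega)
    rw [z1, z2, z3] at h
    have : (w j : ℤ) = (v j : ℤ) := by linarith
    exact_mod_cast this
end

section
/- Let B ⊆ ℤ^r be a finite set and I_B ⊆ ℚ[x₁,...,x_r] the ideal generated by the pure binomials x^{b⁺} - x^{b⁻} for b ∈ B. Then the saturation of I_B with respect to x₁⋯x_r is again generated by pure difference binomials. -/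
open MvPolynomial

noncomputable def xpowQ {r : ℕ} (d : Fin r → ℕ) : MvPolynomial (Fin r) ℚ :=
  ∏ j, X j ^ d j

namespace Stmt16Aux

variable {r : ℕ}

def natHom (r : ℕ) : (Fin r →₀ ℕ) →+ (Fin r → ℤ) where
  toFun d := fun j => (d j : ℤ)
  map_zero' := by funext j; simp
  map_add' a b := by funext j; simp

variable (B : Finset (Fin r → ℤ))

def L : AddSubgroup (Fin r → ℤ) := AddSubgroup.closure B

noncomputable def φ : (Fin r →₀ ℕ) →+ ((Fin r → ℤ) ⧸ L B) :=
  (QuotientAddGroup.mk' (L B)).comp (natHom r)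

noncomputable def ψ : MvPolynomial (Fin r) ℚ →+* AddMonoidAlgebra ℚ ((Fin r → ℤ) ⧸ L B) :=
  AddMonoidAlgebra.mapDomainRingHom ℚ (φ B)

lemma ψ_monomial (d : Fin r →₀ ℕ) (c : ℚ) :
    ψ B (monomial d c) = AddMonoidAlgebra.single (φ B d) c := by
  rw [← single_eq_monomial]
  show AddMonoidAlgebra.mapDomain (φ B) (AddMonoidAlgebra.single d c) = _
  exact AddMonoidAlgebra.mapDomain_single

lemma xpow_eq (d : Fin r → ℕ) :
    xpowQ d = monomial (Finsupp.equivFunOnFinite.symm d) 1 := by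
  have h2 : (Finsupp.equivFunOnFinite.symm d) = ∑ j : Fin r, Finsupp.single j (d j) := by
    ext a
    simp [Finsupp.single_apply, Finset.sum_ite_eq']
  rw [xpowQ, h2, monomial_sum_one]
  exact Finset.prod_congr rfl fun j _ => X_pow_eq_monomial

lemma xpow_add (p q : Fin r → ℕ) : xpowQ (p + q) = xpowQ p * xpowQ q := by
  simp [xpowQ, pow_add, Finset.prod_mul_distrib]

/-- `φ` is determined by the class of the exponent vector. -/
lemma φ_symm (p : Fin r → ℕ) :
    φ B (Finsupp.equivFunOnFinite.symm p)
      = QuotientAddGroup.mk (fun j => (p j : ℤ)) := by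
  rfl

lemma φ_eq_iff (u v : Fin r →₀ ℕ) :
    φ B u = φ B v ↔ ((fun j => (u j : ℤ)) - fun j => (v j : ℤ)) ∈ L B := by
  show QuotientAddGroup.mk' (L B) _ = QuotientAddGroup.mk' (L B) _ ↔ _
  simp only [QuotientAddGroup.mk'_apply]
  exact QuotientAddGroup.eq_iff_sub_mem

/-- The generating set `G`. -/
def G : Set (MvPolynomial (Fin r) ℚ) :=
  (fun c => xpowQ (_root_.posPart c) - xpowQ (_root_.negPart c)) '' (L B : Set (Fin r → ℤ))

lemma key1 (u v : Fin r →₀ ℕ) (huv : φ B u = φ B v) :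
    (monomial u 1 - monomial v 1 : MvPolynomial (Fin r) ℚ) ∈ Ideal.span (G B) := by
  set c : Fin r → ℤ := (fun j => (u j : ℤ)) - fun j => (v j : ℤ) with hc
  have hcL : c ∈ L B := (φ_eq_iff B u v).mp huv
  set w : Fin r → ℕ := fun j => min (u j) (v j) with hw
  have hu : (u : Fin r → ℕ) = w + _root_.posPart c := by
    funext j
    simp only [hw, hc, _root_.posPart, Pi.add_apply, Pi.sub_apply]
    omega
  have hv : (v : Fin r → ℕ) = w + _root_.negPart c := by
    funext j
    simp only [hw, hc, _root_.negPart, Pi.add_apply, Pi.sub_apply]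
    omega
  have : (monomial u 1 - monomial v 1 : MvPolynomial (Fin r) ℚ)
      = xpowQ w * (xpowQ (_root_.posPart c) - xpowQ (_root_.negPart c)) := by
    rw [mul_sub, ← xpow_add, ← xpow_add, ← hu, ← hv, xpow_eq, xpow_eq]
    simp
  rw [this]
  exact Ideal.mul_mem_left _ _ (Ideal.subset_span ⟨c, hcL, rfl⟩)

end Stmt16Aux

namespace Stmt16Aux
variable {r : ℕ} (B : Finset (Fin r → ℤ))

lemma ψ_as_sum (f : MvPolynomial (Fin r) ℚ) :
    ψ B f = ∑ d ∈ f.support, AddMonoidAlgebra.single (φ B d) (coeff d f) := by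
  conv_lhs => rw [f.as_sum]
  rw [map_sum]
  exact Finset.sum_congr rfl fun d _ => ψ_monomial B d _

open Classical in
lemma ψ_apply (f : MvPolynomial (Fin r) ℚ) (q : (Fin r → ℤ) ⧸ L B) :
    (ψ B f).coeff q
      = ∑ d ∈ f.support.filter (fun d => φ B d = q), coeff d f := by
  rw [ψ_as_sum, Finset.sum_filter, AddMonoidAlgebra.coeff_sum, Finsupp.finset_sum_apply]
  exact Finset.sum_congr rfl fun d _ => by rw [AddMonoidAlgebra.coeff_single, Finsupp.single_apply]

end Stmt16Aux

namespace Stmt16Aux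
variable {r : ℕ} (B : Finset (Fin r → ℤ))

open Classical in
lemma key2 : ∀ (n : ℕ) (f : MvPolynomial (Fin r) ℚ), f.support.card ≤ n →
    ψ B f = 0 → f ∈ Ideal.span (G B) := by
  intro n
  induction n with
  | zero =>
    intro f hcard _
    have : f = 0 := by
      rw [← support_eq_empty, ← Finset.card_eq_zero]; omega
    simp [this]
  | succ n ih =>
    intro f hcard hf
    by_cases h0 : f = 0
    · simp [h0]
    obtain ⟨u, hu⟩ := (Finset.nonempty_iff_ne_empty.mpr (fun h : f.support = ∅ => h0 (support_eq_empty.mp h)))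
    set F := f.support.filter (fun v => φ B v = φ B u) with hFdef
    have huF : u ∈ F := by simp [hFdef, hu]
    have hsum : ∑ v ∈ F, coeff v f = 0 := by
      have := ψ_apply B f (φ B u)
      rw [hf] at this
      simpa using this.symm
    set g : MvPolynomial (Fin r) ℚ :=
      ∑ v ∈ F, C (coeff v f) * (monomial v 1 - monomial u 1) with hgdef
    have hgmem : g ∈ Ideal.span (G B) :=
      Submodule.sum_mem _ fun v hv => Ideal.mul_mem_left _ _
        (key1 B v u (by simpa [hFdef] using (Finset.mem_filter.mp hv).2))
    -- g equals the sum of the monomials of f in the fiber F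
    have hgeq : g = ∑ v ∈ F, monomial v (coeff v f) := by
      rw [hgdef]
      have : ∀ v ∈ F, C (coeff v f) * (monomial v 1 - monomial u 1)
          = monomial v (coeff v f) - monomial u (coeff v f) := by
        intro v _
        rw [mul_sub, C_mul_monomial, C_mul_monomial, mul_one]
      rw [Finset.sum_congr rfl this, Finset.sum_sub_distrib]
      have : ∑ v ∈ F, (monomial u (coeff v f) : MvPolynomial (Fin r) ℚ)
          = monomial u (∑ v ∈ F, coeff v f) := by
        rw [map_sum]
      rw [this, hsum]
      simp
    have hcoeffg : ∀ d, coeff d g = if d ∈ F then coeff d f else 0 := by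
      intro d
      rw [hgeq]
      rw [coeff_sum]
      simp only [coeff_monomial]
      rw [Finset.sum_ite_eq' F d (fun v => coeff v f)]
    have hψg : ψ B g = 0 := by
      rw [hgdef, map_sum]
      refine Finset.sum_eq_zero fun v hv => ?_
      rw [map_mul, map_sub, ψ_monomial, ψ_monomial,
        (Finset.mem_filter.mp hv).2, sub_self, mul_zero]
    have hsupp : (f - g).support ⊆ f.support \ F := by
      intro d hd
      rw [mem_support_iff] at hd
      rw [coeff_sub, hcoeffg] at hd
      by_cases hdF : d ∈ F
      · simp [hdF] at hd
      · simp only [hdF, if_false, sub_zero] at hd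
        exact Finset.mem_sdiff.mpr ⟨mem_support_iff.mpr hd, hdF⟩
    have hcard' : (f - g).support.card ≤ n := by
      have h1 : (f.support \ F).card < f.support.card := by
        apply Finset.card_lt_card
        constructor
        · exact Finset.sdiff_subset
        · intro hsub
          have := hsub (Finset.mem_filter.mp huF).1
          simp [huF] at this
      have := Finset.card_le_card hsupp
      omega
    have hψfg : ψ B (f - g) = 0 := by rw [map_sub, hf, hψg, sub_zero]
    have hmem := ih (f - g) hcard' hψfg
    have : f = (f - g) + g := by ring
    rw [this]
    exact Submodule.add_mem _ hmem hgmem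

end Stmt16Aux

namespace Stmt16Aux
variable {r : ℕ} (B : Finset (Fin r → ℤ))

/-- the ideal `I_B` -/
noncomputable def IB : Ideal (MvPolynomial (Fin r) ℚ) :=
  Ideal.span ((fun b => xpowQ (_root_.posPart b) - xpowQ (_root_.negPart b)) ''
    (B : Set (Fin r → ℤ)))

noncomputable def hB : MvPolynomial (Fin r) ℚ := ∏ j, X j

/-- the saturation as an ideal -/
noncomputable def sat : Ideal (MvPolynomial (Fin r) ℚ) where
  carrier := {a | ∃ m : ℕ, 0 < m ∧ a * hB ^ m ∈ IB B}
  zero_mem' := ⟨1, one_pos, by simp⟩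
  add_mem' := by
    rintro a b ⟨m, hm, ha⟩ ⟨n, hn, hb⟩
    refine ⟨m + n, by omega, ?_⟩
    have : (a + b) * hB ^ (m + n)
        = (a * hB ^ m) * hB ^ n + (b * hB ^ n) * hB ^ m := by ring
    rw [this]
    exact Submodule.add_mem _ (Ideal.mul_mem_right _ _ ha) (Ideal.mul_mem_right _ _ hb)
  smul_mem' := by
    rintro c a ⟨m, hm, ha⟩
    refine ⟨m, hm, ?_⟩
    rw [smul_eq_mul, mul_assoc]
    exact Ideal.mul_mem_left _ _ ha

lemma h_pow_eq (N : ℕ) : (hB : MvPolynomial (Fin r) ℚ) ^ N = xpowQ (fun _ => N) := by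
  rw [hB, xpowQ, ← Finset.prod_pow]

/-- every pure binomial from the lattice is in the saturation -/
lemma binomial_mem_sat (c : Fin r → ℤ) (hc : c ∈ L B) :
    xpowQ (_root_.posPart c) - xpowQ (_root_.negPart c) ∈ sat B := by
  induction hc using AddSubgroup.closure_induction with
  | mem b hb =>
    exact ⟨1, one_pos, Ideal.mul_mem_right _ _ (Ideal.subset_span ⟨b, hb, rfl⟩)⟩
  | zero =>
    refine ⟨1, one_pos, ?_⟩
    have : _root_.posPart (0 : Fin r → ℤ) = _root_.negPart 0 := by
      funext j; simp [_root_.posPart, _root_.negPart]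
    rw [this, sub_self, zero_mul]
    exact Submodule.zero_mem _
  | add c d hcL hdL hc hd =>
    -- here `mul` is addition `c + d`
    obtain ⟨m, hm, hmI⟩ := hc
    obtain ⟨n, hn, hnI⟩ := hd
    set w : Fin r → ℕ := fun j =>
      _root_.posPart c j + _root_.posPart d j - _root_.posPart (c + d) j with hw
    have hupos : _root_.posPart c + _root_.posPart d = _root_.posPart (c + d) + w := by
      funext j
      simp only [hw, _root_.posPart, Pi.add_apply]
      omega
    have huneg : _root_.negPart c + _root_.negPart d = _root_.negPart (c + d) + w := by
      funext j
      simp only [hw, hupos, _root_.posPart, _root_.negPart, Pi.add_apply]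
      omega
    have hident : xpowQ w * (xpowQ (_root_.posPart (c + d)) - xpowQ (_root_.negPart (c + d)))
        = xpowQ (_root_.posPart d) * (xpowQ (_root_.posPart c) - xpowQ (_root_.negPart c))
          + xpowQ (_root_.negPart c) * (xpowQ (_root_.posPart d) - xpowQ (_root_.negPart d)) := by
      have e1 : xpowQ (_root_.posPart (c+d)) * xpowQ w = xpowQ (_root_.posPart c) * xpowQ (_root_.posPart d) := by
        rw [← xpow_add, ← xpow_add, ← hupos]
      have e2 : xpowQ (_root_.negPart (c+d)) * xpowQ w = xpowQ (_root_.negPart c) * xpowQ (_root_.negPart d) := by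
        rw [← xpow_add, ← xpow_add, ← huneg]
      calc xpowQ w * (xpowQ (_root_.posPart (c + d)) - xpowQ (_root_.negPart (c + d)))
          = xpowQ (_root_.posPart (c+d)) * xpowQ w - xpowQ (_root_.negPart (c+d)) * xpowQ w := by
            ring
        _ = xpowQ (_root_.posPart c) * xpowQ (_root_.posPart d)
              - xpowQ (_root_.negPart c) * xpowQ (_root_.negPart d) := by rw [e1, e2]
        _ = _ := by ring
    set N : ℕ := ∑ j, w j with hN
    have hwle : ∀ j, w j ≤ N := fun j =>
      Finset.single_le_sum (fun i _ => Nat.zero_le (w i)) (Finset.mem_univ j)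
    have hsplit : (hB : MvPolynomial (Fin r) ℚ) ^ N = xpowQ w * xpowQ (fun j => N - w j) := by
      rw [h_pow_eq, ← xpow_add]
      congr 1
      funext j
      simp only [Pi.add_apply]
      have := hwle j
      omega
    refine ⟨m + n + N, by omega, ?_⟩
    have hfin : (xpowQ (_root_.posPart (c + d)) - xpowQ (_root_.negPart (c + d))) * hB ^ (m + n + N)
        = (xpowQ (_root_.posPart d) * hB ^ n * ((xpowQ (_root_.posPart c) - xpowQ (_root_.negPart c)) * hB ^ m)
          + xpowQ (_root_.negPart c) * hB ^ m * ((xpowQ (_root_.posPart d) - xpowQ (_root_.negPart d)) * hB ^ n))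
          * xpowQ (fun j => N - w j) := by
      rw [pow_add, pow_add, hsplit]
      calc (xpowQ (_root_.posPart (c + d)) - xpowQ (_root_.negPart (c + d))) *
            (hB ^ m * hB ^ n * (xpowQ w * xpowQ fun j => N - w j))
          = (xpowQ w * (xpowQ (_root_.posPart (c + d)) - xpowQ (_root_.negPart (c + d))))
            * hB ^ m * hB ^ n * xpowQ (fun j => N - w j) := by ring
        _ = _ := by rw [hident]; ring
    rw [hfin]
    exact Ideal.mul_mem_right _ _
      (Submodule.add_mem _ (Ideal.mul_mem_left _ _ hmI) (Ideal.mul_mem_left _ _ hnI))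
  | neg c hcL hc =>
    obtain ⟨m, hm, hmI⟩ := hc
    refine ⟨m, hm, ?_⟩
    have h1 : _root_.posPart (-c) = _root_.negPart c := by
      funext j; simp [_root_.posPart, _root_.negPart]
    have h2 : _root_.negPart (-c) = _root_.posPart c := by
      funext j; simp [_root_.posPart, _root_.negPart]
    rw [h1, h2]
    have : (xpowQ (_root_.negPart c) - xpowQ (_root_.posPart c)) * hB ^ m
        = -((xpowQ (_root_.posPart c) - xpowQ (_root_.negPart c)) * hB ^ m) := by ring
    rw [this]
    exact Submodule.neg_mem _ hmI

end Stmt16Aux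

namespace Stmt16Aux
variable {r : ℕ} (B : Finset (Fin r → ℤ))

lemma span_G_le_sat : Ideal.span (G B) ≤ sat B := by
  rw [Ideal.span_le]
  rintro g ⟨c, hc, rfl⟩
  exact binomial_mem_sat B c hc

lemma ψ_xpow (p : Fin r → ℕ) :
    ψ B (xpowQ p) = AddMonoidAlgebra.single (φ B (Finsupp.equivFunOnFinite.symm p)) 1 := by
  rw [xpow_eq, ψ_monomial]

lemma IB_le_ker : IB B ≤ RingHom.ker (ψ B) := by
  rw [IB, Ideal.span_le]
  rintro g ⟨b, hb, rfl⟩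
  rw [SetLike.mem_coe, RingHom.mem_ker, map_sub, ψ_xpow, ψ_xpow]
  have : φ B (Finsupp.equivFunOnFinite.symm (_root_.posPart b))
      = φ B (Finsupp.equivFunOnFinite.symm (_root_.negPart b)) := by
    rw [φ_eq_iff]
    have : ((fun j => ((Finsupp.equivFunOnFinite.symm (_root_.posPart b)) j : ℤ)) -
        fun j => ((Finsupp.equivFunOnFinite.symm (_root_.negPart b)) j : ℤ)) = b := by
      funext j
      simp only [Finsupp.coe_equivFunOnFinite_symm, Pi.sub_apply,
        _root_.posPart, _root_.negPart]
      omega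
    rw [this]
    exact AddSubgroup.subset_closure hb
  rw [this, sub_self]

lemma sat_le_ker : ∀ a : MvPolynomial (Fin r) ℚ, (∃ m : ℕ, 0 < m ∧ a * hB ^ m ∈ IB B) →
    ψ B a = 0 := by
  rintro a ⟨m, _, hmem⟩
  have h0 : ψ B (a * hB ^ m) = 0 := IB_le_ker B hmem
  rw [map_mul, map_pow] at h0
  have hψh : ψ B hB = AddMonoidAlgebra.single (φ B (Finsupp.equivFunOnFinite.symm fun _ => 1)) 1 := by
    rw [← ψ_xpow]
    congr 1
    simp [hB, xpowQ]
  rw [hψh] at h0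
  set q := φ B (Finsupp.equivFunOnFinite.symm fun _ => (1:ℕ)) with hq
  rw [AddMonoidAlgebra.single_pow, one_pow] at h0
  have := congrArg (· * AddMonoidAlgebra.single (-(m • q)) (1:ℚ)) h0
  simp only [zero_mul, mul_assoc] at this
  rw [AddMonoidAlgebra.single_mul_single, add_neg_cancel, one_mul] at this
  rw [← AddMonoidAlgebra.one_def, mul_one] at this
  exact this

end Stmt16Aux

/-- The saturation of a pure binomial ideal `I_B` with respect to `x₁⋯x_r` is again
generated by pure difference binomials. -/
theorem stmt16 (r : ℕ) (B : Finset (Fin r → ℤ)) :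
    let I : Ideal (MvPolynomial (Fin r) ℚ) :=
      Ideal.span ((fun b => xpowQ (posPart b) - xpowQ (negPart b)) '' (B : Set (Fin r → ℤ)))
    let h : MvPolynomial (Fin r) ℚ := ∏ j, X j
    ∃ G : Set (MvPolynomial (Fin r) ℚ),
      (∀ g ∈ G, ∃ p q : Fin r → ℕ, g = xpowQ p - xpowQ q) ∧
      {a : MvPolynomial (Fin r) ℚ | ∃ m : ℕ, 0 < m ∧ a * h ^ m ∈ I}
        = (Ideal.span G : Set (MvPolynomial (Fin r) ℚ)) := by
  intro I h
  refine ⟨Stmt16Aux.G B, ?_, ?_⟩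
  · rintro g ⟨c, _, rfl⟩
    exact ⟨posPart c, negPart c, rfl⟩
  · ext a
    simp only [Set.mem_setOf_eq, SetLike.mem_coe]
    constructor
    · intro ha
      exact Stmt16Aux.key2 B a.support.card a le_rfl (Stmt16Aux.sat_le_ker B a ha)
    · intro ha
      exact Stmt16Aux.span_G_le_sat B ha
end

section
/- Let b₁,...,bₙ ∈ ℤ^r with all entries bounded in absolute value by β ≥ 1. Then any nonzero solution t ∈ ℕ^n of a system of n-1 homogeneous linear equations of the form Σ_{i=1}^n t(i)·((b_i⁺)_j - (b_i⁻)_j) = 0 (for n-1 choices of j), which generates an extremal ray of the corresponding cone, can be chosen with L¹-norm Σ_i t(i) ≤ (2nβ)^{n-1}. -/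
open Finset

attribute [local instance] Matrix.seminormedAddCommGroup

/-- Clear denominators of a rational vector. -/
lemma rat_clear_denoms {ι : Type*} [Fintype ι] (x : ι → ℚ) :
    ∃ (d : ℕ) (u : ι → ℤ), 0 < d ∧ ∀ i, (u i : ℚ) = d * x i := by
  classical
  refine ⟨∏ i, (x i).den, fun i => (x i).num * ((∏ j, (x j).den) / (x i).den : ℕ), ?_, ?_⟩
  · exact Finset.prod_pos fun i _ => (x i).pos
  · intro i
    have hdvd : (x i).den ∣ ∏ j, (x j).den := Finset.dvd_prod_of_mem _ (Finset.mem_univ i)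
    have key : ((∏ j, (x j).den : ℕ) : ℚ) = ((∏ j, (x j).den) / (x i).den : ℕ) * ((x i).den : ℚ) := by
      rw [← Nat.cast_mul, Nat.div_mul_cancel hdvd]
    rw [key, mul_assoc, mul_comm ((x i).den : ℚ) (x i), Rat.mul_den_eq_num]
    rw [Int.cast_mul, Int.cast_natCast, mul_comm]

lemma siegel_arith (s n β : ℕ) (h2 : 2 ≤ s) (hsn : s ≤ n) (hβ : 1 ≤ β) :
    s * (s * β) ^ (s - 1) ≤ (2 * n * β) ^ (n - 1) := by
  have h1n : 1 ≤ n := le_trans (by norm_num) (le_trans h2 hsn)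
  have hb1 : 1 ≤ n * β := Nat.one_le_iff_ne_zero.2 (by positivity)
  calc s * (s * β) ^ (s - 1) ≤ n * (n * β) ^ (n - 1) := by
        apply Nat.mul_le_mul hsn
        calc (s * β) ^ (s - 1) ≤ (n * β) ^ (s - 1) :=
              Nat.pow_le_pow_left (Nat.mul_le_mul_right _ hsn) _
          _ ≤ (n * β) ^ (n - 1) := Nat.pow_le_pow_right hb1 (by omega)
    _ ≤ 2 ^ (n - 1) * (n * β) ^ (n - 1) := by
        apply Nat.mul_le_mul_right
        have : n - 1 < 2 ^ (n - 1) := Nat.lt_two_pow_self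
        omega
    _ = (2 * n * β) ^ (n - 1) := by rw [mul_assoc, ← Nat.mul_pow]

/-- dot-with-x as a linear functional -/
def dotLin {ι : Type*} [Fintype ι] (x : ι → ℚ) : (ι → ℚ) →ₗ[ℚ] ℚ where
  toFun v := ∑ i, v i * x i
  map_add' v w := by simp [add_mul, Finset.sum_add_distrib]
  map_smul' c v := by simp [Finset.mul_sum, mul_assoc]

lemma dotLin_apply {ι : Type*} [Fintype ι] (x v : ι → ℚ) : dotLin x v = ∑ i, v i * x i := rfl

/-- Siegel-type bound: if `b₁,…,bₙ ∈ ℤ^r` have entries bounded by `β ≥ 1` and a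
system of `n-1` homogeneous equations `Σᵢ t(i)·(bᵢ)_j = 0` (for `j` in a set `J` of
`n-1` coordinates) admits a nonzero solution `t ∈ ℕ^n`, then it admits a nonzero
solution of `L¹`-norm at most `(2nβ)^{n-1}`. -/
theorem stmt17 (r n : ℕ) (β : ℕ) (hβ : 1 ≤ β) (b : Fin n → (Fin r → ℤ))
    (hb : ∀ i j, |b i j| ≤ (β : ℤ))
    (J : Finset (Fin r)) (hJ : J.card = n - 1)
    (t₀ : Fin n → ℕ) (ht₀ : t₀ ≠ 0)
    (h : ∀ j ∈ J, ∑ i, (t₀ i : ℤ) * b i j = 0) :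
    ∃ t : Fin n → ℕ, t ≠ 0 ∧ (∀ j ∈ J, ∑ i, (t i : ℤ) * b i j = 0) ∧
      (∑ i, t i) ≤ (2 * n * β) ^ (n - 1) := by
  classical
  suffices H : ∀ k (t : Fin n → ℕ), (Finset.univ.filter fun i => t i ≠ 0).card ≤ k → t ≠ 0 →
      (∀ j ∈ J, ∑ i, (t i : ℤ) * b i j = 0) →
      ∃ t' : Fin n → ℕ, t' ≠ 0 ∧ (∀ j ∈ J, ∑ i, (t' i : ℤ) * b i j = 0) ∧
        (∑ i, t' i) ≤ (2 * n * β) ^ (n - 1) by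
    exact H _ t₀ le_rfl ht₀ h
  intro k
  induction k with
  | zero =>
    intro t hc ht _
    exfalso
    obtain ⟨i, hi⟩ := Function.ne_iff.1 ht
    simp only [Pi.zero_apply] at hi
    have hmem : i ∈ Finset.univ.filter fun i => t i ≠ 0 := by simp [hi]
    have := Finset.card_pos.2 ⟨i, hmem⟩
    omega
  | succ k ih =>
    intro t hc ht heq
    set S := Finset.univ.filter (fun i => t i ≠ 0) with hSdef
    have hmemS : ∀ i, i ∈ S ↔ t i ≠ 0 := by intro i; simp [hSdef]
    obtain ⟨iw, hiw⟩ := Function.ne_iff.1 ht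
    simp only [Pi.zero_apply] at hiw
    have hSpos : 0 < S.card := Finset.card_pos.2 ⟨iw, (hmemS iw).2 hiw⟩
    have hn1 : 1 ≤ n := by
      have := Fintype.card_pos_iff.2 ⟨iw⟩
      simp at this; omega
    rcases Nat.lt_or_ge S.card 2 with hs1 | hs2
    · -- support is a single coordinate
      have hcard1 : S.card = 1 := by omega
      obtain ⟨i₀, hi₀⟩ := Finset.card_eq_one.1 hcard1
      have hti₀ : t i₀ ≠ 0 := (hmemS i₀).1 (hi₀ ▸ Finset.mem_singleton_self i₀)
      have htzero : ∀ i, i ≠ i₀ → t i = 0 := by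
        intro i hne
        by_contra h0
        have : i ∈ S := (hmemS i).2 h0
        rw [hi₀, Finset.mem_singleton] at this
        exact hne this
      have hb0 : ∀ j ∈ J, b i₀ j = 0 := by
        intro j hj
        have h1 : ∑ i, (t i : ℤ) * b i j = (t i₀ : ℤ) * b i₀ j :=
          Finset.sum_eq_single_of_mem i₀ (Finset.mem_univ i₀)
            (fun i _ hne => by rw [htzero i hne]; ring)
        have h2 := heq j hj
        rw [h1] at h2
        rcases mul_eq_zero.1 h2 with h3 | h3
        · exact absurd (by exact_mod_cast h3) hti₀
        · exact h3
      refine ⟨Pi.single i₀ 1, ?_, ?_, ?_⟩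
      · intro h0
        have := congrFun h0 i₀
        simp at this
      · intro j hj
        have h1 : ∑ i, ((Pi.single i₀ 1 : Fin n → ℕ) i : ℤ) * b i j = ((1:ℕ) : ℤ) * b i₀ j :=
          Finset.sum_eq_single_of_mem i₀ (Finset.mem_univ i₀)
            (fun i _ hne => by rw [Pi.single_eq_of_ne hne]; simp) |>.trans
            (by rw [Pi.single_eq_same])
        rw [h1, hb0 j hj, mul_zero]
      · have h1 : ∑ i, (Pi.single i₀ 1 : Fin n → ℕ) i = 1 := by
          rw [Finset.sum_eq_single_of_mem i₀ (Finset.mem_univ i₀)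
            (fun i _ hne => Pi.single_eq_of_ne hne 1), Pi.single_eq_same]
        rw [h1]
        exact Nat.one_le_pow _ _ (by positivity)
    · by_cases hA : ∃ u : Fin n → ℤ, (∀ j ∈ J, ∑ i, u i * b i j = 0) ∧
          (∀ i, t i = 0 → u i = 0) ∧ ¬∃ c : ℚ, ∀ i, (u i : ℚ) = c * (t i : ℚ)
      · -- Case A: reduce support
        obtain ⟨u₁, hu₁_eq, hu₁_supp, hu₁_nonprop⟩ := hA
        have hu₁0 : u₁ ≠ 0 := by
          intro h0
          exact hu₁_nonprop ⟨0, fun i => by rw [h0]; simp⟩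
        obtain ⟨i₁, hi₁⟩ := Function.ne_iff.1 hu₁0
        simp only [Pi.zero_apply] at hi₁
        have hexists : ∃ u : Fin n → ℤ, (∀ j ∈ J, ∑ i, u i * b i j = 0) ∧
            (∀ i, t i = 0 → u i = 0) ∧ (¬∃ c : ℚ, ∀ i, (u i : ℚ) = c * (t i : ℚ)) ∧ ∃ i, 0 < u i := by
          rcases lt_or_gt_of_ne hi₁ with hneg | hpos
          · refine ⟨-u₁, ?_, ?_, ?_, ⟨i₁, by simpa using hneg⟩⟩
            · intro j hj
              have h2 := hu₁_eq j hj
              simp only [Pi.neg_apply, neg_mul, Finset.sum_neg_distrib]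
              omega
            · intro i h0; simp [hu₁_supp i h0]
            · rintro ⟨c, hc⟩
              refine hu₁_nonprop ⟨-c, fun i => ?_⟩
              have := hc i
              simp only [Pi.neg_apply] at this
              push_cast at this ⊢
              linarith
          · exact ⟨u₁, hu₁_eq, hu₁_supp, hu₁_nonprop, ⟨i₁, hpos⟩⟩
        obtain ⟨u, hu_eq, hu_supp, hu_nonprop, i₁', hi₁pos⟩ := hexists
        set P := Finset.univ.filter (fun i => 0 < u i) with hPdef
        obtain ⟨i₀, hi₀P, hi₀min⟩ := Finset.exists_min_image P (fun i => (t i : ℚ) / (u i : ℚ))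
          ⟨i₁', by simp [hPdef, hi₁pos]⟩
        have hu_i₀ : 0 < u i₀ := by
          have := Finset.mem_filter.1 hi₀P
          exact this.2
        have ht_i₀ : 0 < t i₀ := by
          rcases Nat.eq_zero_or_pos (t i₀) with h0 | h0
          · have := hu_supp i₀ h0; omega
          · exact h0
        set t' : Fin n → ℤ := fun i => u i₀ * (t i : ℤ) - (t i₀ : ℤ) * u i with ht'def
        have ht'_nonneg : ∀ i, 0 ≤ t' i := by
          intro i
          rcases le_or_gt (u i) 0 with hui | hui
          · have h1 : (0:ℤ) ≤ u i₀ * t i := mul_nonneg (by omega) (by positivity)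
            have h2 : (t i₀ : ℤ) * u i ≤ 0 := mul_nonpos_of_nonneg_of_nonpos (by positivity) hui
            simp only [ht'def]
            omega
          · have hmin := hi₀min i (Finset.mem_filter.2 ⟨Finset.mem_univ i, hui⟩)
            rw [div_le_div_iff₀ (by exact_mod_cast hu_i₀) (by exact_mod_cast hui)] at hmin
            have h3 : (t i₀ : ℤ) * u i ≤ (t i : ℤ) * u i₀ := by exact_mod_cast hmin
            have hcomm : (t i : ℤ) * u i₀ = u i₀ * (t i : ℤ) := mul_comm _ _
            simp only [ht'def]
            omega
        have ht'_i₀ : t' i₀ = 0 := by simp only [ht'def]; ring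
        have ht'_supp : ∀ i, t i = 0 → t' i = 0 := by
          intro i h0
          simp [ht'def, h0, hu_supp i h0]
        have ht'_ne : ∃ i, t' i ≠ 0 := by
          by_contra h0
          push_neg at h0
          apply hu_nonprop
          refine ⟨(u i₀ : ℚ) / (t i₀ : ℚ), fun i => ?_⟩
          have hieq : u i₀ * (t i : ℤ) = (t i₀ : ℤ) * u i := by
            have := h0 i; simp only [ht'def] at this; omega
          have hti₀Q : ((t i₀ : ℚ)) ≠ 0 := by positivity
          rw [div_mul_eq_mul_div, eq_div_iff hti₀Q]
          exact_mod_cast (by linarith : u i * (t i₀ : ℤ) = u i₀ * t i)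
        set t'' : Fin n → ℕ := fun i => (t' i).toNat with ht''def
        have ht''_cast : ∀ i, (t'' i : ℤ) = t' i := fun i => Int.toNat_of_nonneg (ht'_nonneg i)
        have ht''_ne : t'' ≠ 0 := by
          obtain ⟨i, hi⟩ := ht'_ne
          intro h0
          apply hi
          rw [← ht''_cast i, congrFun h0 i]
          rfl
        have ht''_eq : ∀ j ∈ J, ∑ i, (t'' i : ℤ) * b i j = 0 := by
          intro j hj
          simp only [ht''_cast, ht'def]
          have hexp : ∑ i, (u i₀ * (t i : ℤ) - (t i₀ : ℤ) * u i) * b i j =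
              u i₀ * (∑ i, (t i : ℤ) * b i j) - (t i₀ : ℤ) * ∑ i, u i * b i j := by
            rw [Finset.mul_sum, Finset.mul_sum, ← Finset.sum_sub_distrib]
            apply Finset.sum_congr rfl
            intro i _
            ring
          rw [hexp, heq j hj, hu_eq j hj]
          ring
        have hsub : (Finset.univ.filter fun i => t'' i ≠ 0) ⊂ S := by
          constructor
          · intro i hi
            rw [Finset.mem_filter] at hi
            apply (hmemS i).2
            intro h0
            apply hi.2
            have := ht'_supp i h0
            simp [ht''def, this]
          · intro hsup
            have h1 := hsup ((hmemS i₀).2 (by omega))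
            rw [Finset.mem_filter] at h1
            apply h1.2
            simp [ht''def, ht'_i₀]
        have hcard' : (Finset.univ.filter fun i => t'' i ≠ 0).card ≤ k := by
          have := Finset.card_lt_card hsub
          omega
        exact ih t'' hcard' ht''_ne ht''_eq
      · -- Case B : kernel is one-dimensional
        push_neg at hA
        set N : Matrix {j // j ∈ J} {i // i ∈ S} ℚ := fun j i => ((b i.1 j.1 : ℤ) : ℚ) with hNdef
        set tS : {i // i ∈ S} → ℚ := fun i => (t i.1 : ℚ) with htSdef
        have heqQ : ∀ j ∈ J, ∑ i, (t i : ℚ) * (b i j : ℚ) = 0 := fun j hj => by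
          exact_mod_cast heq j hj
        have htS0 : tS ≠ 0 := by
          intro h0
          have h1 := congrFun h0 ⟨iw, (hmemS iw).2 hiw⟩
          simp only [htSdef, Pi.zero_apply] at h1
          exact hiw (by exact_mod_cast h1)
        have hsum_ext : ∀ (f : Fin n → ℚ) (j : Fin r), (∀ i, i ∉ S → f i = 0) →
            ∑ i : {i // i ∈ S}, f i.1 * (b i.1 j : ℚ) = ∑ i, f i * (b i j : ℚ) := by
          intro f j hf
          rw [Finset.sum_coe_sort S (fun i => f i * (b i j : ℚ))]
          exact Finset.sum_subset (Finset.subset_univ S)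
            (fun i _ hi => by rw [hf i hi, zero_mul])
        have hkermem : ∀ x : {i // i ∈ S} → ℚ, x ∈ LinearMap.ker N.mulVecLin ↔
            ∀ j ∈ J, ∑ i : {i // i ∈ S}, x i * (b i.1 j : ℚ) = 0 := by
          intro x
          rw [LinearMap.mem_ker]
          constructor
          · intro h0 j hj
            have h1 := congrFun h0 ⟨j, hj⟩
            simp only [Matrix.mulVecLin_apply, Pi.zero_apply, Matrix.mulVec,
              dotProduct, hNdef] at h1
            rw [← h1]
            exact Finset.sum_congr rfl fun i _ => mul_comm _ _
          · intro h0
            funext j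
            simp only [Matrix.mulVecLin_apply, Pi.zero_apply, Matrix.mulVec,
              dotProduct, hNdef]
            rw [← h0 j.1 j.2]
            change ∑ i, ((b i.1 j.1 : ℤ) : ℚ) * x i = _
            exact Finset.sum_congr rfl fun i _ => mul_comm _ _
        have htS_ker : tS ∈ LinearMap.ker N.mulVecLin := by
          rw [hkermem]
          intro j hj
          have h1 := hsum_ext (fun i => (t i : ℚ)) j (fun i hi => by
            have h2 : t i = 0 := by
              by_contra hne
              exact hi ((hmemS i).2 hne)
            show ((t i : ℕ) : ℚ) = 0
            exact_mod_cast h2)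
          simp only [htSdef]
          rw [h1]
          exact heqQ j hj
        have hkerle : LinearMap.ker N.mulVecLin ≤ Submodule.span ℚ {tS} := by
          intro x hx
          obtain ⟨d, xz, hd, hxz⟩ := rat_clear_denoms x
          set u : Fin n → ℤ := fun i => if hi : i ∈ S then xz ⟨i, hi⟩ else 0 with hudef
          have huS : ∀ i : {i // i ∈ S}, u i.1 = xz i := by
            intro i
            simp [hudef, i.2]
          have hu_supp : ∀ i, t i = 0 → u i = 0 := by
            intro i h0
            have hiS : i ∉ S := fun hi => (hmemS i).1 hi h0
            simp [hudef, hiS]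
          have hu_eqns : ∀ j ∈ J, ∑ i, u i * b i j = 0 := by
            intro j hj
            have hQ : ∑ i, (u i : ℚ) * (b i j : ℚ) = 0 := by
              rw [← hsum_ext (fun i => (u i : ℚ)) j (fun i hi => by simp [hudef, hi])]
              have hcong : ∀ i : {i // i ∈ S}, ((u i.1 : ℚ)) * (b i.1 j : ℚ)
                  = (d : ℚ) * (x i * (b i.1 j : ℚ)) := by
                intro i
                rw [huS i, hxz i]
                ring
              rw [Finset.sum_congr rfl (fun i _ => hcong i), ← Finset.mul_sum]
              rw [(hkermem x).1 hx j hj, mul_zero]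
            exact_mod_cast hQ
          obtain ⟨c, hc⟩ := hA u hu_eqns hu_supp
          have hxc : x = (c / d) • tS := by
            funext i
            have h1 : (u i.1 : ℚ) = d * x i := by rw [huS i]; exact hxz i
            have h2 := hc i.1
            rw [h1] at h2
            have hd0 : (d : ℚ) ≠ 0 := by positivity
            simp only [Pi.smul_apply, smul_eq_mul, htSdef]
            field_simp
            linarith [h2]
          rw [hxc]
          exact Submodule.smul_mem _ _ (Submodule.mem_span_singleton_self tS)
        have hker_eq : LinearMap.ker N.mulVecLin = Submodule.span ℚ {tS} :=
          le_antisymm hkerle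
            (by rw [Submodule.span_le, Set.singleton_subset_iff]; exact htS_ker)
        have hfinker : Module.finrank ℚ (LinearMap.ker N.mulVecLin) = 1 := by
          rw [hker_eq]
          exact finrank_span_singleton htS0
        have hcardS : Fintype.card {i // i ∈ S} = S.card := Fintype.card_coe S
        have hdims := LinearMap.finrank_range_add_finrank_ker N.mulVecLin
        rw [hfinker, Module.finrank_pi, hcardS] at hdims
        have hrank : N.rank = S.card - 1 := by
          have h1 : N.rank = Module.finrank ℚ (LinearMap.range N.mulVecLin) := rfl
          omega
        have hrowspan : Module.finrank ℚ (Submodule.span ℚ (Set.range N)) = S.card - 1 := by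
          have h1 : N.transpose.rank = N.rank := Matrix.rank_transpose N
          have h2 := Matrix.rank_eq_finrank_span_cols N.transpose
          change N.transpose.rank = Module.finrank ℚ (Submodule.span ℚ (Set.range N)) at h2
          rw [← h2, h1, hrank]
        obtain ⟨bs, hbs_sub, hbs_span, hbs_ind⟩ := exists_linearIndependent ℚ (Set.range N)
        have hbs_fin : bs.Finite := Set.Finite.subset (Set.finite_range N) hbs_sub
        haveI := hbs_fin.fintype
        have hbs_card : bs.toFinset.card = S.card - 1 := by
          rw [← finrank_span_set_eq_card hbs_ind, hbs_span]
          exact hrowspan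
        set eqv : {v // v ∈ bs.toFinset} ≃ Fin (S.card - 1) := Finset.equivFinOfCardEq hbs_card
          with heqvdef
        have hrow : ∀ l : Fin (S.card - 1), ∃ j : {j // j ∈ J}, N j = (eqv.symm l).1 := by
          intro l
          have h1 : ((eqv.symm l : {v // v ∈ bs.toFinset}) : {i // i ∈ S} → ℚ) ∈ bs := by
            have := (eqv.symm l).2
            rwa [Set.mem_toFinset] at this
          exact Set.mem_range.1 (hbs_sub h1)
        choose jsel hjsel using hrow
        set MZ : Matrix (Fin (S.card - 1)) {i // i ∈ S} ℤ :=
          fun l i => b i.1 (jsel l).1 with hMZdef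
        have hMZcast : ∀ l i, ((MZ l i : ℤ) : ℚ) = N (jsel l) i := by
          intro l i
          simp [hMZdef, hNdef]
        have hlt : Fintype.card (Fin (S.card - 1)) < Fintype.card {i // i ∈ S} := by
          rw [Fintype.card_fin, hcardS]
          omega
        have hpos : 0 < Fintype.card (Fin (S.card - 1)) := by
          rw [Fintype.card_fin]
          omega
        obtain ⟨x, hx0, hxsol, hxnorm⟩ := Int.Matrix.exists_ne_zero_int_vec_norm_le MZ hlt hpos
        have hMZnorm : ‖MZ‖ ≤ (β : ℝ) := by
          rw [Matrix.norm_le_iff (by positivity)]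
          intro l i
          rw [Int.norm_eq_abs]
          exact_mod_cast hb i.1 (jsel l).1
        have hxbound : ∀ i, (x i).natAbs ≤ (S.card * β) ^ (S.card - 1) := by
          intro i
          have h1 : ‖x i‖ ≤ ‖x‖ := norm_le_pi_norm x i
          have h2 : (1 : ℝ) ⊔ ‖MZ‖ ≤ (β : ℝ) := sup_le (by exact_mod_cast hβ) hMZnorm
          have hexp : ((Fintype.card {i // i ∈ S} : ℝ)) - ((Fintype.card (Fin (S.card - 1)) : ℝ))
              = 1 := by
            rw [Fintype.card_fin, hcardS]
            have : ((S.card - 1 : ℕ) : ℝ) = (S.card : ℝ) - 1 := by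
              push_cast [Nat.cast_sub (by omega : 1 ≤ S.card)]
              ring
            rw [this]
            ring
          rw [hexp, div_one, Real.rpow_natCast] at hxnorm
          have h3 : ((Fintype.card {i // i ∈ S} : ℝ)) * ((1:ℝ) ⊔ ‖MZ‖) ≤ (S.card : ℝ) * β := by
            rw [hcardS]
            exact mul_le_mul_of_nonneg_left h2 (by positivity)
          have h4 : ‖x i‖ ≤ ((S.card : ℝ) * β) ^ (Fintype.card (Fin (S.card - 1))) := by
            calc ‖x i‖ ≤ ‖x‖ := h1
              _ ≤ ((Fintype.card {i // i ∈ S} : ℝ) * ((1:ℝ) ⊔ ‖MZ‖))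
                    ^ (Fintype.card (Fin (S.card - 1))) := hxnorm
              _ ≤ ((S.card : ℝ) * β) ^ (Fintype.card (Fin (S.card - 1))) := by
                  apply pow_le_pow_left₀ (by positivity) h3
          rw [Fintype.card_fin] at h4
          rw [Int.norm_eq_abs] at h4
          have h5 : ((x i).natAbs : ℝ) ≤ (((S.card * β) ^ (S.card - 1) : ℕ) : ℝ) := by
            rw [Nat.cast_natAbs]
            push_cast
            exact le_trans (le_of_eq (by push_cast; ring)) h4
          exact_mod_cast h5
        set u : Fin n → ℤ := fun i => if hi : i ∈ S then x ⟨i, hi⟩ else 0 with hudef2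
        have huS : ∀ i : {i // i ∈ S}, u i.1 = x i := by
          intro i
          simp [hudef2, i.2]
        have hu_supp : ∀ i, t i = 0 → u i = 0 := by
          intro i h0
          have hiS : i ∉ S := fun hi => (hmemS i).1 hi h0
          simp [hudef2, hiS]
        have hu_eqns : ∀ j ∈ J, ∑ i, u i * b i j = 0 := by
          intro j hj
          have hspan_le : Submodule.span ℚ bs ≤
              LinearMap.ker (dotLin (fun i => ((x i : ℤ) : ℚ))) := by
            rw [Submodule.span_le]
            intro v hv
            have hvF : v ∈ bs.toFinset := Set.mem_toFinset.2 hv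
            have hvN : N (jsel (eqv ⟨v, hvF⟩)) = v := by
              rw [hjsel (eqv ⟨v, hvF⟩)]
              simp
            simp only [SetLike.mem_coe, LinearMap.mem_ker]
            rw [← hvN, dotLin_apply]
            have h6 := congrFun hxsol (eqv ⟨v, hvF⟩)
            simp only [Matrix.mulVec, dotProduct, Pi.zero_apply] at h6
            have h7 : ∑ i, ((MZ (eqv ⟨v, hvF⟩) i : ℚ)) * ((x i : ℤ) : ℚ) = 0 := by
              exact_mod_cast h6
            rw [← h7]
          have hNj : N ⟨j, hj⟩ ∈ Submodule.span ℚ bs := by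
            rw [hbs_span]
            exact Submodule.subset_span (Set.mem_range_self _)
          have h0 := hspan_le hNj
          rw [LinearMap.mem_ker, dotLin_apply] at h0
          have hQ : ∑ i, (u i : ℚ) * (b i j : ℚ) = 0 := by
            rw [← hsum_ext (fun i => (u i : ℚ)) j (fun i hi => by simp [hudef2, hi])]
            rw [← h0]
            apply Finset.sum_congr rfl
            intro i _
            rw [huS i]
            simp only [hNdef]
            ring
          exact_mod_cast hQ
        obtain ⟨c, hc⟩ := hA u hu_eqns hu_supp
        refine ⟨fun i => (u i).natAbs, ?_, ?_, ?_⟩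
        · obtain ⟨i, hi⟩ := Function.ne_iff.1 hx0
          simp only [Pi.zero_apply] at hi
          intro h0
          have h1 := congrFun h0 i.1
          simp only [Pi.zero_apply] at h1
          apply hi
          have h2 := Int.natAbs_eq_zero.1 h1
          rw [huS i] at h2
          exact h2
        · intro j hj
          have habs : ∀ i, (((u i).natAbs : ℤ) : ℚ) = |c| * (t i : ℚ) := by
            intro i
            rw [Int.cast_natCast, Nat.cast_natAbs]
            push_cast
            rw [hc i, abs_mul, abs_of_nonneg (by positivity : (0:ℚ) ≤ (t i : ℚ))]
          have hQ : ∑ i, (((u i).natAbs : ℤ) : ℚ) * (b i j : ℚ) = 0 := by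
            rw [Finset.sum_congr rfl (fun i _ => by rw [habs i])]
            have : ∑ i, |c| * (t i : ℚ) * (b i j : ℚ)
                = |c| * ∑ i, (t i : ℚ) * (b i j : ℚ) := by
              rw [Finset.mul_sum]
              exact Finset.sum_congr rfl fun i _ => by ring
            rw [this, heqQ j hj, mul_zero]
          show (∑ i, ((u i).natAbs : ℤ) * b i j = 0)
          exact_mod_cast hQ
        · have hsplit : ∑ i, (u i).natAbs = ∑ i : {i // i ∈ S}, (x i).natAbs := by
            rw [← Finset.sum_subset (Finset.subset_univ S)
              (fun i _ hi => by simp [hudef2, hi])]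
            rw [← Finset.sum_coe_sort S (fun i => (u i).natAbs)]
            exact Finset.sum_congr rfl fun i _ => by rw [huS i]
          rw [hsplit]
          have hsn : S.card ≤ n := by
            have := Finset.card_le_univ S
            simpa using this
          calc ∑ i : {i // i ∈ S}, (x i).natAbs
              ≤ ∑ _i : {i // i ∈ S}, (S.card * β) ^ (S.card - 1) :=
                Finset.sum_le_sum fun i _ => hxbound i
            _ = S.card * (S.card * β) ^ (S.card - 1) := by
                rw [Finset.sum_const, smul_eq_mul, Finset.card_univ, hcardS]
            _ ≤ (2 * n * β) ^ (n - 1) := siegel_arith S.card n β hs2 hsn hβ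
end
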